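/- arXiv:1605.04568 — 2 statements merged into one kernel-verified Lean document; each statement's English description precedes it below -/
import Mathlib

section
/- Let B = (b_{jk})_{1 ≤ j,k ≤ n} be a complex n×n matrix such that 1 − 4^{−n} < |b_{jj}| < 3/2 + 4^{−n} for all j, |b_{jk}| < 3/2 + 4^{−n} whenever j < k, and |b_{jk}| < 4^{−n} whenever j > k. Then the matrix B is non-degenerate (has nonzero determinant). -/
/-- Partial sums of the geometric series with ratio `2/7` are at most `7/5`. -/
lemma geom27_sum_le (m : ℕ) : ∑ k ∈ Finset.range m, (2/7 : ℝ) ^ k ≤ 7/5 := by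
  induction m with
  | zero => norm_num
  | succ m ih =>
    rw [geom_sum_succ]
    have := mul_le_mul_of_nonneg_left ih (by norm_num : (0:ℝ) ≤ 2/7)
    linarith

/-- Key numeric inequality. -/
lemma key_ineq (n : ℕ) (hn : 2 ≤ n) : (7/8 : ℝ) ^ n + (7/2) * ((4:ℝ) ^ n)⁻¹ < 1 := by
  induction n, hn using Nat.le_induction with
  | base => norm_num
  | succ n hn ih =>
    have h4 : (0:ℝ) < ((4:ℝ) ^ n)⁻¹ := by positivity
    have h78 : (0:ℝ) < (7/8:ℝ) ^ n := by positivity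
    have e1 : ((4:ℝ) ^ (n+1))⁻¹ = ((4:ℝ) ^ n)⁻¹ * (4:ℝ)⁻¹ := by
      rw [pow_succ, mul_inv]
    rw [pow_succ, e1]
    nlinarith

/-- Let `B = (b_{jk})` be a complex `n×n` matrix such that
`1 − 4^{−n} < |b_{jj}| < 3/2 + 4^{−n}` for all `j`,
`|b_{jk}| < 3/2 + 4^{−n}` whenever `j < k`, and `|b_{jk}| < 4^{−n}` whenever `j > k`.
Then `B` is non-degenerate, i.e. `det B ≠ 0`. -/
theorem matrix_nondegenerate_of_small_lower_entries'
    (n : ℕ) (B : Matrix (Fin n) (Fin n) ℂ)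
    (hdiag_lb : ∀ j, 1 - ((4 : ℝ) ^ n)⁻¹ < ‖B j j‖)
    (hdiag_ub : ∀ j, ‖B j j‖ < 3 / 2 + ((4 : ℝ) ^ n)⁻¹)
    (hupper : ∀ j k, j < k → ‖B j k‖ < 3 / 2 + ((4 : ℝ) ^ n)⁻¹)
    (hlower : ∀ j k, k < j → ‖B j k‖ < ((4 : ℝ) ^ n)⁻¹) :
    B.det ≠ 0 := by
  rcases Nat.lt_or_ge n 2 with hn | hn
  · interval_cases n
    · simp [Matrix.det_isEmpty]
    · rw [Matrix.det_fin_one]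
      intro h
      have h0 := hdiag_lb 0
      rw [show B 0 0 = 0 from h] at h0
      simp at h0
      norm_num at h0
  -- main case : n ≥ 2
  set ε : ℝ := ((4:ℝ) ^ n)⁻¹ with hε
  have hε0 : 0 < ε := by positivity
  set d : Fin n → ℂ := fun j => (((7/2 : ℝ) ^ (j:ℕ) : ℝ) : ℂ) with hd
  set e : Fin n → ℂ := fun j => ((((7/2 : ℝ) ^ (j:ℕ) : ℝ) : ℂ))⁻¹ with he
  have hd0 : ∀ j, d j ≠ 0 := by
    intro j
    exact Complex.ofReal_ne_zero.mpr (by positivity)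
  set C : Matrix (Fin n) (Fin n) ℂ := Matrix.diagonal d * B * Matrix.diagonal e with hC
  have hCentry : ∀ i j, C i j = d i * B i j * e j := by
    intro i j
    rw [hC, Matrix.mul_diagonal, Matrix.diagonal_mul]
  have hdetC : C.det = B.det := by
    rw [hC, Matrix.det_mul, Matrix.det_mul, Matrix.det_diagonal, Matrix.det_diagonal]
    have h1 : (∏ j, d j) * B.det * ∏ j, e j = ((∏ j, d j) * ∏ j, e j) * B.det := by ring
    have h2 : (∏ j, d j) * ∏ j, e j = 1 := by
      rw [← Finset.prod_mul_distrib]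
      exact Finset.prod_eq_one fun j _ => mul_inv_cancel₀ (hd0 j)
    rw [h1, h2, one_mul]
  rw [← hdetC]
  have hnorm : ∀ i j, ‖C i j‖ =
      (7/2:ℝ) ^ (i:ℕ) * ‖B i j‖ * ((7/2:ℝ) ^ (j:ℕ))⁻¹ := by
    intro i j
    rw [hCentry, norm_mul, norm_mul, he, norm_inv]
    simp only [hd, Complex.norm_real, Real.norm_eq_abs]
    rw [abs_of_pos (by positivity : (0:ℝ) < (7/2:ℝ) ^ (i:ℕ)),
      abs_of_pos (by positivity : (0:ℝ) < (7/2:ℝ) ^ (j:ℕ))]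
  apply det_ne_zero_of_sum_row_lt_diag
  intro i
  have hCii : ‖C i i‖ = ‖B i i‖ := by
    rw [hnorm]
    have h7 : ((7/2:ℝ) ^ (i:ℕ)) ≠ 0 := by positivity
    field_simp
  rw [hCii]
  have hne : (Finset.univ.erase i).Nonempty := by
    rw [← Finset.card_pos, Finset.card_erase_of_mem (Finset.mem_univ i),
      Finset.card_univ, Fintype.card_fin]
    omega
  -- termwise bound functions
  have key : ∑ j ∈ Finset.univ.erase i, ‖C i j‖ <
      (∑ j : Fin n, (7/2:ℝ) ^ (i:ℕ) * ε * ((7/2:ℝ) ^ (j:ℕ))⁻¹) +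
      (∑ j : Fin n, (3/2 + ε) *
        (if (i:ℕ) < (j:ℕ) then (2/7:ℝ) ^ ((j:ℕ) - (i:ℕ)) else 0)) := by
    have step1 : ∑ j ∈ Finset.univ.erase i, ‖C i j‖ <
        ∑ j ∈ Finset.univ.erase i,
          ((7/2:ℝ) ^ (i:ℕ) * ε * ((7/2:ℝ) ^ (j:ℕ))⁻¹ +
            (3/2 + ε) * (if (i:ℕ) < (j:ℕ) then (2/7:ℝ) ^ ((j:ℕ) - (i:ℕ)) else 0)) := by
      apply Finset.sum_lt_sum_of_nonempty hne
      intro j hj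
      have hji : j ≠ i := Finset.ne_of_mem_erase hj
      have hvne : (j:ℕ) ≠ (i:ℕ) := Fin.val_ne_of_ne hji
      rw [hnorm]
      have hpos1 : (0:ℝ) < (7/2:ℝ) ^ (i:ℕ) := by positivity
      have hpos2 : (0:ℝ) < ((7/2:ℝ) ^ (j:ℕ))⁻¹ := by positivity
      rcases Nat.lt_or_ge (j:ℕ) (i:ℕ) with h | h
      · -- lower entry
        have hB : ‖B i j‖ < ε := hlower i j (by exact_mod_cast h)
        have hstep : (7/2:ℝ) ^ (i:ℕ) * ‖B i j‖ * ((7/2:ℝ) ^ (j:ℕ))⁻¹ <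
            (7/2:ℝ) ^ (i:ℕ) * ε * ((7/2:ℝ) ^ (j:ℕ))⁻¹ :=
          mul_lt_mul_of_pos_right (mul_lt_mul_of_pos_left hB hpos1) hpos2
        have hif : ¬ ((i:ℕ) < (j:ℕ)) := by omega
        rw [if_neg hif, mul_zero]
        linarith
      · -- upper entry (j ≠ i, so i < j)
        have hij : (i:ℕ) < (j:ℕ) := by omega
        have hB : ‖B i j‖ < 3/2 + ε := hupper i j (by exact_mod_cast hij)
        have hstep : (7/2:ℝ) ^ (i:ℕ) * ‖B i j‖ * ((7/2:ℝ) ^ (j:ℕ))⁻¹ <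
            (7/2:ℝ) ^ (i:ℕ) * (3/2 + ε) * ((7/2:ℝ) ^ (j:ℕ))⁻¹ :=
          mul_lt_mul_of_pos_right (mul_lt_mul_of_pos_left hB hpos1) hpos2
        have hpow : (7/2:ℝ) ^ (i:ℕ) * ((7/2:ℝ) ^ (j:ℕ))⁻¹ = (2/7:ℝ) ^ ((j:ℕ) - (i:ℕ)) := by
          have hj' : (7/2:ℝ) ^ (j:ℕ) = (7/2:ℝ) ^ (i:ℕ) * (7/2:ℝ) ^ ((j:ℕ) - (i:ℕ)) := by
            rw [← pow_add]
            congr 1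
            omega
          rw [hj', mul_inv, ← mul_assoc, mul_inv_cancel₀ (by positivity), one_mul, ← inv_pow]
          norm_num
        have heq : (7/2:ℝ) ^ (i:ℕ) * (3/2 + ε) * ((7/2:ℝ) ^ (j:ℕ))⁻¹ =
            (3/2 + ε) * (2/7:ℝ) ^ ((j:ℕ) - (i:ℕ)) := by
          rw [← hpow]; ring
        rw [if_pos hij]
        have ht1nn : (0:ℝ) ≤ (7/2:ℝ) ^ (i:ℕ) * ε * ((7/2:ℝ) ^ (j:ℕ))⁻¹ := by positivity
        linarith [hstep, heq ▸ hstep]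
    refine step1.trans_le ?_
    rw [Finset.sum_add_distrib]
    apply add_le_add
    · exact Finset.sum_le_sum_of_subset_of_nonneg (Finset.subset_univ _)
        (fun j _ _ => by positivity)
    · apply Finset.sum_le_sum_of_subset_of_nonneg (Finset.subset_univ _)
      intro j _ _
      have h2 : (0:ℝ) ≤ if (i:ℕ) < (j:ℕ) then (2/7:ℝ) ^ ((j:ℕ) - (i:ℕ)) else 0 := by
        split <;> positivity
      exact mul_nonneg (by positivity) h2
  -- bound the first sum
  have hbound1 : (∑ j : Fin n, (7/2:ℝ) ^ (i:ℕ) * ε * ((7/2:ℝ) ^ (j:ℕ))⁻¹) ≤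
      (2/5) * (7/8:ℝ) ^ n := by
    have hrw : ∀ j : Fin n, (7/2:ℝ) ^ (i:ℕ) * ε * ((7/2:ℝ) ^ (j:ℕ))⁻¹ =
        (7/2:ℝ) ^ (i:ℕ) * ε * (2/7:ℝ) ^ (j:ℕ) := by
      intro j
      rw [← inv_pow]
      norm_num
    calc (∑ j : Fin n, (7/2:ℝ) ^ (i:ℕ) * ε * ((7/2:ℝ) ^ (j:ℕ))⁻¹)
        = (7/2:ℝ) ^ (i:ℕ) * ε * ∑ j : Fin n, (2/7:ℝ) ^ (j:ℕ) := by
          rw [Finset.mul_sum]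
          exact Finset.sum_congr rfl fun j _ => hrw j
      _ = (7/2:ℝ) ^ (i:ℕ) * ε * ∑ k ∈ Finset.range n, (2/7:ℝ) ^ k := by
          rw [Fin.sum_univ_eq_sum_range (fun k => (2/7:ℝ) ^ k)]
      _ ≤ (7/2:ℝ) ^ (n-1) * ε * (7/5) := by
          have h1 : (7/2:ℝ) ^ (i:ℕ) ≤ (7/2:ℝ) ^ (n-1) :=
            pow_le_pow_right₀ (by norm_num) (by omega)
          have h2 := geom27_sum_le n
          have hs0 : (0:ℝ) ≤ ∑ k ∈ Finset.range n, (2/7:ℝ) ^ k :=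
            Finset.sum_nonneg fun k _ => by positivity
          exact mul_le_mul (mul_le_mul_of_nonneg_right h1 hε0.le) h2 hs0 (by positivity)
      _ = (2/5) * (7/8:ℝ) ^ n := by
          have h3 : (7/2:ℝ) ^ (n-1) * (7/2) = (7/2:ℝ) ^ n := by
            rw [← pow_succ]
            congr 1
            omega
          have h4 : (7/8:ℝ) ^ n = (7/2:ℝ) ^ n * ((4:ℝ) ^ n)⁻¹ := by
            rw [← inv_pow, ← mul_pow]
            norm_num
          rw [hε, h4, ← h3]
          ring
  -- bound the second sum
  have hbound2 : (∑ j : Fin n, (3/2 + ε) *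
      (if (i:ℕ) < (j:ℕ) then (2/7:ℝ) ^ ((j:ℕ) - (i:ℕ)) else 0)) ≤ (3/2 + ε) * (2/5) := by
    rw [← Finset.mul_sum]
    have hS : (∑ j : Fin n, (if (i:ℕ) < (j:ℕ) then (2/7:ℝ) ^ ((j:ℕ) - (i:ℕ)) else 0)) ≤ 2/5 := by
      rw [Fin.sum_univ_eq_sum_range (fun k => if (i:ℕ) < k then (2/7:ℝ) ^ (k - (i:ℕ)) else 0)]
      rw [← Finset.sum_filter]
      have hfil : (Finset.range n).filter (fun k => (i:ℕ) < k) = Finset.Ico ((i:ℕ)+1) n := by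
        ext k
        simp only [Finset.mem_filter, Finset.mem_range, Finset.mem_Ico]
        omega
      rw [hfil, Finset.sum_Ico_eq_sum_range]
      have hterm : ∀ k, (2/7:ℝ) ^ (((i:ℕ) + 1 + k) - (i:ℕ)) = (2/7) * (2/7:ℝ) ^ k := by
        intro k
        rw [show ((i:ℕ) + 1 + k) - (i:ℕ) = k + 1 by omega, pow_succ]
        ring
      calc (∑ k ∈ Finset.range (n - ((i:ℕ)+1)), (2/7:ℝ) ^ (((i:ℕ) + 1 + k) - (i:ℕ)))
          = (2/7) * ∑ k ∈ Finset.range (n - ((i:ℕ)+1)), (2/7:ℝ) ^ k := by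
            rw [Finset.mul_sum]
            exact Finset.sum_congr rfl fun k _ => hterm k
        _ ≤ (2/7) * (7/5) := by
            have := geom27_sum_le (n - ((i:ℕ)+1))
            linarith
        _ = 2/5 := by norm_num
    nlinarith [hε0]
  -- combine
  have hkey := key_ineq n hn
  have hlb := hdiag_lb i
  calc ∑ j ∈ Finset.univ.erase i, ‖C i j‖
      < (2/5) * (7/8:ℝ) ^ n + (3/2 + ε) * (2/5) := by linarith [key, hbound1, hbound2]
    _ ≤ 1 - ε := by linarith [hkey, hε.le, hε.ge]
    _ < ‖B i i‖ := hlb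
end

section
/- Let a_1,…,a_m be points on the unit sphere 𝕊^n ⊂ ℝ^{n+1} and let G = (g_{uv}) with g_{uv} = ⟨a_u,a_v⟩ be their Gram matrix, so g_{uv} = cos dist_{𝕊^n}(a_u,a_v). Suppose κ > 0 is chosen so that for any u and v one has either |g_{uv} − 1| > κ or |g_{uv} − 1| < κ/4. Then for any vertices u, v, w, if {u,w} and {v,w} are edges of Γ(G,κ) and u ≠ v, then {u,v} is an edge of Γ(G,κ); consequently Γ(G,κ) is a disjoint union of complete graphs and K(G,κ) is a disjoint union of simplices. -/
/-- Let `a₁, …, a_m` be points on the unit sphere `𝕊^n ⊂ ℝ^{n+1}` and let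
`g_{uv} = ⟨a_u, a_v⟩ (= cos dist(a_u, a_v))` be their Gram matrix.  Suppose `κ > 0` is such
that for all `u, v` either `|g_{uv} − 1| > κ` or `|g_{uv} − 1| < κ/4`.  Then whenever
`{u,w}` and `{v,w}` are edges of the graph `Γ(G,κ)` (i.e. `u ≠ w`, `|g_{uw} − 1| < κ`,
etc.) and `u ≠ v`, also `{u,v}` is an edge of `Γ(G,κ)`; consequently the relation
"`u = v` or `{u,v}` is an edge" is an equivalence relation, i.e. `Γ(G,κ)` is a disjoint
union of complete graphs, and hence its clique complex `K(G,κ)` is a disjoint union of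
simplices. -/
theorem gram_graph_union_of_complete_graphs
    (n m : ℕ) (a : Fin m → EuclideanSpace ℝ (Fin (n + 1)))
    (hsphere : ∀ u, ‖a u‖ = 1)
    (κ : ℝ) (hκ : 0 < κ)
    (hsep : ∀ u v : Fin m,
      κ < |(inner ℝ (a u) (a v) : ℝ) - 1| ∨ |(inner ℝ (a u) (a v) : ℝ) - 1| < κ / 4) :
    (∀ u v w : Fin m, u ≠ v →
      (u ≠ w ∧ |(inner ℝ (a u) (a w) : ℝ) - 1| < κ) →
      (v ≠ w ∧ |(inner ℝ (a v) (a w) : ℝ) - 1| < κ) →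
      (|(inner ℝ (a u) (a v) : ℝ) - 1| < κ)) ∧
    Equivalence (fun u v : Fin m => u = v ∨
      (u ≠ v ∧ |(inner ℝ (a u) (a v) : ℝ) - 1| < κ)) := by
  -- key: |⟨a u, a v⟩ - 1| = ‖a u - a v‖² / 2
  have key : ∀ u v : Fin m, |(inner ℝ (a u) (a v) : ℝ) - 1| = ‖a u - a v‖ ^ 2 / 2 := by
    intro u v
    have hle : (inner ℝ (a u) (a v) : ℝ) ≤ 1 := by
      calc (inner ℝ (a u) (a v) : ℝ) ≤ ‖a u‖ * ‖a v‖ := real_inner_le_norm _ _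
        _ = 1 := by rw [hsphere u, hsphere v]; ring
    have hsq : ‖a u - a v‖ ^ 2 = 2 - 2 * (inner ℝ (a u) (a v) : ℝ) := by
      rw [@norm_sub_sq_real, hsphere u, hsphere v]; ring
    rw [hsq, abs_of_nonpos (by linarith)]; ring
  have edge : ∀ u v w : Fin m, u ≠ v →
      (u ≠ w ∧ |(inner ℝ (a u) (a w) : ℝ) - 1| < κ) →
      (v ≠ w ∧ |(inner ℝ (a v) (a w) : ℝ) - 1| < κ) →
      (|(inner ℝ (a u) (a v) : ℝ) - 1| < κ) := by
    intro u v w huv ⟨_, huw⟩ ⟨_, hvw⟩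
    have huw' : |(inner ℝ (a u) (a w) : ℝ) - 1| < κ / 4 :=
      (hsep u w).resolve_left (by linarith)
    have hvw' : |(inner ℝ (a v) (a w) : ℝ) - 1| < κ / 4 :=
      (hsep v w).resolve_left (by linarith)
    rw [key] at huw' hvw' ⊢
    have h1 : ‖a u - a w‖ ^ 2 < κ / 2 := by linarith
    have h2 : ‖a v - a w‖ ^ 2 < κ / 2 := by linarith
    have htri : ‖a u - a v‖ ≤ ‖a u - a w‖ + ‖a w - a v‖ := by
      have := norm_sub_le_norm_sub_add_norm_sub (a u) (a w) (a v)
      linarith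
    have hwv : ‖a w - a v‖ = ‖a v - a w‖ := norm_sub_rev _ _
    nlinarith [norm_nonneg (a u - a v), norm_nonneg (a u - a w), norm_nonneg (a v - a w),
      sq_nonneg (‖a u - a w‖ - ‖a v - a w‖)]
  refine ⟨edge, ?_, ?_, ?_⟩
  · intro u; exact Or.inl rfl
  · intro u v h
    rcases h with h | ⟨hne, hlt⟩
    · exact Or.inl h.symm
    · exact Or.inr ⟨hne.symm, by rwa [real_inner_comm]⟩
  · intro u v w huv hvw
    rcases huv with rfl | ⟨huv, huvlt⟩
    · exact hvw
    rcases hvw with rfl | ⟨hvw, hvwlt⟩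
    · exact Or.inr ⟨huv, huvlt⟩
    by_cases huw : u = w
    · exact Or.inl huw
    · exact Or.inr ⟨huw, edge u w v huw ⟨huv, huvlt⟩
        ⟨Ne.symm hvw, by rwa [real_inner_comm]⟩⟩
end
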